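/- arXiv:math/0605759 — 3 statements merged into one kernel-verified Lean document; each statement's English description precedes it below -/
import Mathlib

section
/- Let D : U → ℝ be a C² function on a connected open set U ⊆ ℝ² satisfying ∂²D/∂(x¹)² = 0 and ∂D/∂x² = D·∂D/∂x¹ on U, and suppose ∂D/∂x¹ is nowhere zero on U. Then locally D has the form D(x¹,x²) = (x¹ + k₁)/(k₂ − x²) for some constants k₁, k₂. -/
noncomputable def pd1 (f : ℝ × ℝ → ℝ) (p : ℝ × ℝ) : ℝ := fderiv ℝ f p (1, 0)

noncomputable def pd2 (f : ℝ × ℝ → ℝ) (p : ℝ × ℝ) : ℝ := fderiv ℝ f p (0, 1)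

open Metric

lemma hasDerivAt_pd1' {f : ℝ × ℝ → ℝ} {q : ℝ × ℝ} (hf : DifferentiableAt ℝ f q) :
    HasDerivAt (fun x => f (x, q.2)) (pd1 f q) q.1 := by
  have h2 : HasDerivAt (fun x : ℝ => (x, q.2)) ((1:ℝ), (0:ℝ)) q.1 :=
    (hasDerivAt_id q.1).prodMk (hasDerivAt_const q.1 q.2)
  have h := hf.hasFDerivAt
  rw [show q = (q.1, q.2) from rfl] at h
  exact h.comp_hasDerivAt q.1 h2

lemma hasDerivAt_pd2' {f : ℝ × ℝ → ℝ} {q : ℝ × ℝ} (hf : DifferentiableAt ℝ f q) :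
    HasDerivAt (fun y => f (q.1, y)) (pd2 f q) q.2 := by
  have h2 : HasDerivAt (fun y : ℝ => (q.1, y)) ((0:ℝ), (1:ℝ)) q.2 :=
    (hasDerivAt_const q.2 q.1).prodMk (hasDerivAt_id q.2)
  have h := hf.hasFDerivAt
  rw [show q = (q.1, q.2) from rfl] at h
  exact h.comp_hasDerivAt q.2 h2

lemma const_of_hasDerivAt_zero {g : ℝ → ℝ} {s : Set ℝ} (hs : IsOpen s) (hconv : Convex ℝ s)
    (h : ∀ x ∈ s, HasDerivAt g 0 x) {x y : ℝ} (hx : x ∈ s) (hy : y ∈ s) : g x = g y := by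
  apply hconv.is_const_of_fderivWithin_eq_zero (𝕜 := ℝ) (f := g)
  · exact fun z hz => ((h z hz).differentiableAt).differentiableWithinAt
  · intro z hz
    rw [fderivWithin_of_isOpen hs hz]
    have h0 : HasFDerivAt g (0 : ℝ →L[ℝ] ℝ) z := by
      have h0 := (h z hz).hasFDerivAt
      rwa [show ContinuousLinearMap.toSpanSingleton ℝ (0 : ℝ) = 0 by ext x; simp] at h0
    exact h0.fderiv
  · exact hx
  · exact hy

lemma pd1_differentiableAt {D : ℝ × ℝ → ℝ} {U : Set (ℝ × ℝ)} (hU : IsOpen U)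
    (hD : ContDiffOn ℝ 2 D U) {q : ℝ × ℝ} (hq : q ∈ U) :
    DifferentiableAt ℝ (pd1 D) q := by
  have h : ContDiffAt ℝ 2 D q := hD.contDiffAt (hU.mem_nhds hq)
  have h1 : ContDiffAt ℝ 1 (fderiv ℝ D) q := h.fderiv_right (by norm_num)
  have h2 : ContDiffAt ℝ 1 (pd1 D) q := by
    have := h1.clm_apply (contDiffAt_const (c := ((1:ℝ), (0:ℝ))))
    exact this
  exact h2.differentiableAt one_ne_zero

theorem stmt2 (U : Set (ℝ × ℝ)) (hU : IsOpen U) (hUc : IsConnected U)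
    (D : ℝ × ℝ → ℝ) (hD : ContDiffOn ℝ 2 D U)
    (h1 : ∀ p ∈ U, pd1 (pd1 D) p = 0)
    (h2 : ∀ p ∈ U, pd2 D p = D p * pd1 D p)
    (h3 : ∀ p ∈ U, pd1 D p ≠ 0) :
    ∀ p ∈ U, ∃ V : Set (ℝ × ℝ), IsOpen V ∧ p ∈ V ∧ V ⊆ U ∧
      ∃ k₁ k₂ : ℝ, ∀ q ∈ V, D q = (q.1 + k₁) / (k₂ - q.2) := by
  intro p hp
  obtain ⟨r, hr, hball⟩ := Metric.isOpen_iff.1 hU p hp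
  refine ⟨Metric.ball p r, isOpen_ball, mem_ball_self hr, hball, ?_⟩
  have hmem : ∀ x y : ℝ, x ∈ ball p.1 r → y ∈ ball p.2 r → (x, y) ∈ U := by
    intro x y hx hy
    apply hball
    rw [← ball_prod_same]
    exact ⟨hx, hy⟩
  have hDdiff : ∀ q ∈ U, DifferentiableAt ℝ D q := fun q hq =>
    ((hD.differentiableOn (by norm_num)).differentiableAt (hU.mem_nhds hq))
  set a : ℝ → ℝ := fun y => pd1 D (p.1, y) with ha_def
  set b : ℝ → ℝ := fun y => D (p.1, y) with hb_def
  -- Step A: pd1 D is constant in x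
  have hA : ∀ x y : ℝ, x ∈ ball p.1 r → y ∈ ball p.2 r → pd1 D (x, y) = a y := by
    intro x y hx hy
    exact const_of_hasDerivAt_zero isOpen_ball (convex_ball _ _)
      (fun z hz => by
        have := hasDerivAt_pd1' (f := pd1 D) (q := (z, y))
          (pd1_differentiableAt hU hD (hmem z y hz hy))
        rw [h1 (z, y) (hmem z y hz hy)] at this
        simpa using this) hx (mem_ball_self hr)
  -- Step B: D (x, y) = a y * (x - p.1) + b y
  have hB : ∀ x y : ℝ, x ∈ ball p.1 r → y ∈ ball p.2 r →
      D (x, y) = a y * (x - p.1) + b y := by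
    intro x y hx hy
    have key : D (x, y) - a y * (x - p.1) = D (p.1, y) - a y * (p.1 - p.1) := by
      apply const_of_hasDerivAt_zero isOpen_ball (convex_ball _ _)
        (g := fun x => D (x, y) - a y * (x - p.1)) ?_ hx (mem_ball_self hr)
      intro z hz
      have hd := hasDerivAt_pd1' (f := D) (q := (z, y)) (hDdiff (z, y) (hmem z y hz hy))
      have hl : HasDerivAt (fun x : ℝ => a y * (x - p.1)) (a y) z := by
        simpa using ((hasDerivAt_id z).sub_const p.1).const_mul (a y)
      have := hd.sub hl
      rw [hA z y hz hy] at this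
      simpa [Pi.sub_def] using this
    have := key
    simp only [sub_self, mul_zero, sub_zero] at this
    linarith [this]
  -- derivative of b
  have hb' : ∀ y ∈ ball p.2 r, HasDerivAt b (a y * b y) y := by
    intro y hy
    have hd := hasDerivAt_pd2' (f := D) (q := (p.1, y)) (hDdiff _ (hmem _ _ (mem_ball_self hr) hy))
    rw [h2 _ (hmem _ _ (mem_ball_self hr) hy)] at hd
    simpa [ha_def, hb_def, mul_comm] using hd
  -- derivative of a, via the point x₁ = p.1 + r/2
  set x₁ : ℝ := p.1 + r / 2 with hx₁_def
  have hx₁ : x₁ ∈ ball p.1 r := by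
    simp only [mem_ball, hx₁_def, Real.dist_eq]
    rw [show p.1 + r / 2 - p.1 = r / 2 by ring, abs_of_pos (by linarith)]
    linarith
  have ha' : ∀ y ∈ ball p.2 r, HasDerivAt a (a y ^ 2) y := by
    intro y hy
    have hφ := hasDerivAt_pd2' (f := D) (q := (x₁, y)) (hDdiff _ (hmem _ _ hx₁ hy))
    rw [h2 _ (hmem _ _ hx₁ hy)] at hφ
    have hφval : D (x₁, y) = a y * (r / 2) + b y := by
      rw [hB x₁ y hx₁ hy, hx₁_def]; ring_nf
    have hφ1 : pd1 D (x₁, y) = a y := hA x₁ y hx₁ hy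
    rw [hφval, hφ1] at hφ
    have hcomb : HasDerivAt (fun y => (D (x₁, y) - b y) * (2 / r))
        (((a y * (r / 2) + b y) * a y - a y * b y) * (2 / r)) y :=
      (hφ.sub (hb' y hy)).mul_const (2 / r)
    have heq : (fun z => (D (x₁, z) - b z) * (2 / r)) =ᶠ[nhds y] a := by
      filter_upwards [isOpen_ball.mem_nhds hy] with z hz
      rw [hB x₁ z hx₁ hz]
      field_simp
      ring
    have := hcomb.congr_of_eventuallyEq heq.symm
    refine this.congr_deriv ?_
    field_simp
    ring
  have hane : ∀ y ∈ ball p.2 r, a y ≠ 0 := fun y hy =>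
    h3 _ (hmem _ _ (mem_ball_self hr) hy)
  -- solve ODE for a : (a y)⁻¹ + y constant
  set k₂ : ℝ := (a p.2)⁻¹ + p.2 with hk₂_def
  have hc : ∀ y ∈ ball p.2 r, (a y)⁻¹ = k₂ - y := by
    intro y hy
    have key : (a y)⁻¹ + y = (a p.2)⁻¹ + p.2 := by
      apply const_of_hasDerivAt_zero isOpen_ball (convex_ball _ _)
        (g := fun y => (a y)⁻¹ + y) ?_ hy (mem_ball_self hr)
      intro z hz
      have h := ((ha' z hz).inv (hane z hz)).add (hasDerivAt_id z)
      refine h.congr_deriv ?_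
      field_simp [hane z hz]
      norm_num
    rw [hk₂_def]; linarith
  have hk₂ne : ∀ y ∈ ball p.2 r, k₂ - y ≠ 0 := by
    intro y hy
    rw [← hc y hy]
    exact inv_ne_zero (hane y hy)
  have haval : ∀ y ∈ ball p.2 r, a y = (k₂ - y)⁻¹ := by
    intro y hy
    rw [← hc y hy, inv_inv]
  -- b / a constant
  set c₀ : ℝ := b p.2 * (a p.2)⁻¹ with hc₀_def
  have hbval : ∀ y ∈ ball p.2 r, b y = c₀ * a y := by
    intro y hy
    have key : b y * (a y)⁻¹ = b p.2 * (a p.2)⁻¹ := by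
      apply const_of_hasDerivAt_zero isOpen_ball (convex_ball _ _)
        (g := fun y => b y * (a y)⁻¹) ?_ hy (mem_ball_self hr)
      intro z hz
      have h := (hb' z hz).mul ((ha' z hz).inv (hane z hz))
      refine h.congr_deriv ?_
      field_simp [Pi.inv_apply, hane z hz]
      simp [hane z hz]
    have hne := hane y hy
    rw [hc₀_def, ← key]
    field_simp
  refine ⟨c₀ - p.1, k₂, ?_⟩
  intro q hq
  rw [← ball_prod_same] at hq
  obtain ⟨hq1, hq2⟩ := hq
  rw [show q = (q.1, q.2) from rfl, hB q.1 q.2 hq1 hq2, hbval q.2 hq2, haval q.2 hq2]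
  have hne := hk₂ne q.2 hq2
  field_simp
  ring
end

section
/- Let ω : ℝ → ℝ be C¹ and let a : U → ℝ be a C¹ function on an open set U ⊆ ℝ² satisfying x² + (a(x¹,x²)/2)·x¹ + ω'(a(x¹,x²)) = 0 for all (x¹,x²) ∈ U. Define φ(x¹,x²) = x²·a + (a²/4)·x¹ + ω(a). Then ∂φ/∂x² = a and 4·∂φ/∂x¹ − (∂φ/∂x²)² = 0 on U. -/
theorem stmt8 (U : Set (ℝ × ℝ)) (hU : IsOpen U)
    (ω : ℝ → ℝ) (hω : ContDiff ℝ 1 ω)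
    (a : ℝ × ℝ → ℝ) (ha : ContDiffOn ℝ 1 a U)
    (himp : ∀ p ∈ U, p.2 + (a p / 2) * p.1 + deriv ω (a p) = 0)
    (φ : ℝ × ℝ → ℝ)
    (hφ : ∀ p ∈ U, φ p = p.2 * a p + (a p ^ 2 / 4) * p.1 + ω (a p)) :
    ∀ p ∈ U, pd2 φ p = a p ∧ 4 * pd1 φ p - (pd2 φ p) ^ 2 = 0 := by
  intro p hp
  have hnhds : U ∈ nhds p := hU.mem_nhds hp
  have hA : HasFDerivAt a (fderiv ℝ a p) p := by
    exact ((ha.differentiableOn one_ne_zero).differentiableAt hnhds).hasFDerivAt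
  set L := fderiv ℝ a p with hL
  have hωd : HasDerivAt ω (deriv ω (a p)) (a p) :=
    ((hω.differentiable one_ne_zero) (a p)).hasDerivAt
  have hcomp : HasFDerivAt (fun q => ω (a q)) (deriv ω (a p) • L) p :=
    hωd.comp_hasFDerivAt p hA
  have hsnd : HasFDerivAt (fun q : ℝ × ℝ => q.2) (ContinuousLinearMap.snd ℝ ℝ ℝ) p :=
    hasFDerivAt_snd
  have hfst : HasFDerivAt (fun q : ℝ × ℝ => q.1) (ContinuousLinearMap.fst ℝ ℝ ℝ) p :=
    hasFDerivAt_fst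
  have h1 : HasFDerivAt (fun q : ℝ × ℝ => q.2 * a q)
      (p.2 • L + a p • ContinuousLinearMap.snd ℝ ℝ ℝ) p := hsnd.mul hA
  have hsq : HasFDerivAt (fun q => a q ^ 2 / 4) ((a p / 2) • L) p := by
    have h : HasFDerivAt (fun q => (4⁻¹:ℝ) * (a q * a q)) ((4⁻¹:ℝ) • (a p • L + a p • L)) p :=
      (hA.mul hA).const_mul 4⁻¹
    have hfun : (fun q => a q ^ 2 / 4) = fun q => (4⁻¹:ℝ) * (a q * a q) := by
      funext q; rw [sq]; ring
    have hmap : (a p / 2) • L = (4⁻¹:ℝ) • (a p • L + a p • L) := by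
      rw [← add_smul, smul_smul]; congr 1; ring
    rw [hfun, hmap]; exact h
  have h2 : HasFDerivAt (fun q : ℝ × ℝ => (a q ^ 2 / 4) * q.1)
      ((a p ^ 2 / 4) • ContinuousLinearMap.fst ℝ ℝ ℝ + p.1 • ((a p / 2) • L)) p :=
    hsq.mul hfst
  have hψ : HasFDerivAt (fun q : ℝ × ℝ => q.2 * a q + (a q ^ 2 / 4) * q.1 + ω (a q))
      ((p.2 • L + a p • ContinuousLinearMap.snd ℝ ℝ ℝ) +
        ((a p ^ 2 / 4) • ContinuousLinearMap.fst ℝ ℝ ℝ + p.1 • ((a p / 2) • L)) +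
        deriv ω (a p) • L) p := (h1.add h2).add hcomp
  have heq : φ =ᶠ[nhds p] fun q : ℝ × ℝ => q.2 * a q + (a q ^ 2 / 4) * q.1 + ω (a q) := by
    filter_upwards [hnhds] with q hq using hφ q hq
  have hD : fderiv ℝ φ p = (p.2 • L + a p • ContinuousLinearMap.snd ℝ ℝ ℝ) +
      ((a p ^ 2 / 4) • ContinuousLinearMap.fst ℝ ℝ ℝ + p.1 • ((a p / 2) • L)) +
      deriv ω (a p) • L := by
    rw [heq.fderiv_eq, hψ.fderiv]
  have key := himp p hp
  constructor
  · simp only [pd2, hD, ContinuousLinearMap.add_apply, ContinuousLinearMap.smul_apply,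
      ContinuousLinearMap.coe_fst', ContinuousLinearMap.coe_snd', smul_eq_mul]
    linear_combination (L (0, 1)) * key
  · have hpd2 : pd2 φ p = a p := by
      simp only [pd2, hD, ContinuousLinearMap.add_apply, ContinuousLinearMap.smul_apply,
        ContinuousLinearMap.coe_fst', ContinuousLinearMap.coe_snd', smul_eq_mul]
      linear_combination (L (0, 1)) * key
    rw [hpd2]
    simp only [pd1, hD, ContinuousLinearMap.add_apply, ContinuousLinearMap.smul_apply,
      ContinuousLinearMap.coe_fst', ContinuousLinearMap.coe_snd', smul_eq_mul]
    linear_combination (4 * L (1, 0)) * key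
end

section
/- The function φ(x¹,x²) = [(x¹)² + k₂x¹ + k₃]/(k₁ − x²) + k₄ satisfies the system: 2·∂²φ/∂x¹∂x² − (∂φ/∂x¹)·∂²φ/∂(x¹)² = 0, ∂²φ/∂(x²)² − (∂φ/∂x²)·∂²φ/∂(x¹)² = 0, and ∂³φ/∂(x¹)³ = 0, on the region x² ≠ k₁. -/
private lemma hasfd_quot (k₁ a b c : ℝ) (n : ℕ) (p : ℝ × ℝ) (hp : p.2 ≠ k₁) :
    HasFDerivAt (fun q : ℝ × ℝ => (a * q.1 ^ 2 + b * q.1 + c) * ((k₁ - q.2) ^ n)⁻¹)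
      ((a * p.1 ^ 2 + b * p.1 + c) •
          ((-(((n : ℝ) * (k₁ - p.2) ^ (n - 1) * (-1))) / ((k₁ - p.2) ^ n) ^ 2) •
            ContinuousLinearMap.snd ℝ ℝ ℝ) +
        ((k₁ - p.2) ^ n)⁻¹ • ((2 * a * p.1 + b) • ContinuousLinearMap.fst ℝ ℝ ℝ)) p := by
  have hD0 : (k₁ - p.2) ^ n ≠ 0 := pow_ne_zero n (sub_ne_zero.mpr (Ne.symm hp))
  have hN : HasFDerivAt (fun q : ℝ × ℝ => a * q.1 ^ 2 + b * q.1 + c)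
      ((2 * a * p.1 + b) • ContinuousLinearMap.fst ℝ ℝ ℝ) p := by
    have h1 : HasDerivAt (fun x : ℝ => a * x ^ 2 + b * x + c) (2 * a * p.1 + b) p.1 := by
      have := (((hasDerivAt_pow 2 p.1).const_mul a).add
        ((hasDerivAt_id p.1).const_mul b)).add_const c
      exact this.congr_deriv (by simp; ring)
    exact h1.comp_hasFDerivAt p hasFDerivAt_fst
  have hB : HasFDerivAt (fun q : ℝ × ℝ => ((k₁ - q.2) ^ n)⁻¹)
      ((-(((n : ℝ) * (k₁ - p.2) ^ (n - 1) * (-1))) / ((k₁ - p.2) ^ n) ^ 2) •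
        ContinuousLinearMap.snd ℝ ℝ ℝ) p := by
    have h2 : HasDerivAt (fun x : ℝ => k₁ - x) (-1) p.2 := by
      simpa using (hasDerivAt_id p.2).const_sub k₁
    have h3 : HasDerivAt (fun x : ℝ => (k₁ - x) ^ n) ((n : ℝ) * (k₁ - p.2) ^ (n - 1) * (-1)) p.2 :=
      (hasDerivAt_pow n (k₁ - p.2)).comp p.2 h2
    exact (h3.inv hD0).comp_hasFDerivAt p hasFDerivAt_snd
  exact hN.mul hB

private lemma pd_congr (k₁ : ℝ) (f g : ℝ × ℝ → ℝ)
    (h : ∀ q : ℝ × ℝ, q.2 ≠ k₁ → f q = g q) (p : ℝ × ℝ) (hp : p.2 ≠ k₁) :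
    pd1 f p = pd1 g p ∧ pd2 f p = pd2 g p := by
  have hmem : {q : ℝ × ℝ | q.2 ≠ k₁} ∈ nhds p := by
    have hop : IsOpen {q : ℝ × ℝ | q.2 ≠ k₁} :=
      isOpen_compl_singleton.preimage continuous_snd
    exact hop.mem_nhds hp
  have hev : f =ᶠ[nhds p] g := Filter.eventually_of_mem hmem h
  rw [pd1, pd1, pd2, pd2, hev.fderiv_eq]
  exact ⟨rfl, rfl⟩

private lemma pd_quot (k₁ a b c : ℝ) (n : ℕ) (p : ℝ × ℝ) (hp : p.2 ≠ k₁) :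
    pd1 (fun q : ℝ × ℝ => (a * q.1 ^ 2 + b * q.1 + c) * ((k₁ - q.2) ^ n)⁻¹) p
        = (2 * a * p.1 + b) * ((k₁ - p.2) ^ n)⁻¹ ∧
      pd2 (fun q : ℝ × ℝ => (a * q.1 ^ 2 + b * q.1 + c) * ((k₁ - q.2) ^ n)⁻¹) p
        = (a * p.1 ^ 2 + b * p.1 + c) * ((n : ℝ) * (k₁ - p.2) ^ (n - 1)) *
            (((k₁ - p.2) ^ n) ^ 2)⁻¹ := by
  have h := hasfd_quot k₁ a b c n p hp
  rw [pd1, pd2, h.fderiv]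
  constructor <;> · simp; ring

theorem stmt12 (k₁ k₂ k₃ k₄ : ℝ) (φ : ℝ × ℝ → ℝ)
    (hφ : ∀ p : ℝ × ℝ, p.2 ≠ k₁ →
      φ p = (p.1 ^ 2 + k₂ * p.1 + k₃) / (k₁ - p.2) + k₄) :
    ∀ p : ℝ × ℝ, p.2 ≠ k₁ →
      2 * pd2 (pd1 φ) p - pd1 φ p * pd1 (pd1 φ) p = 0 ∧
      pd2 (pd2 φ) p - pd2 φ p * pd1 (pd1 φ) p = 0 ∧
      pd1 (pd1 (pd1 φ)) p = 0 := by
  set f1 : ℝ × ℝ → ℝ := fun q => (0 * q.1 ^ 2 + 2 * q.1 + k₂) * ((k₁ - q.2) ^ 1)⁻¹ with hf1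
  set f2 : ℝ × ℝ → ℝ := fun q => (1 * q.1 ^ 2 + k₂ * q.1 + k₃) * ((k₁ - q.2) ^ 2)⁻¹ with hf2
  set g1 : ℝ × ℝ → ℝ := fun q => (0 * q.1 ^ 2 + 0 * q.1 + 2) * ((k₁ - q.2) ^ 1)⁻¹ with hg1
  -- φ agrees with ψ on U
  have hφψ : ∀ q : ℝ × ℝ, q.2 ≠ k₁ →
      φ q = (fun q : ℝ × ℝ =>
        (1 * q.1 ^ 2 + k₂ * q.1 + k₃) * ((k₁ - q.2) ^ 1)⁻¹ + k₄) q := by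
    intro q hq
    rw [hφ q hq]
    simp [div_eq_mul_inv]
  -- derivatives of ψ
  have hψd : ∀ q : ℝ × ℝ, q.2 ≠ k₁ → pd1 φ q = f1 q ∧ pd2 φ q = f2 q := by
    intro q hq
    have hc := pd_congr k₁ φ _ hφψ q hq
    have h := (hasfd_quot k₁ 1 k₂ k₃ 1 q hq).add_const k₄
    have hq0 : k₁ - q.2 ≠ 0 := sub_ne_zero.mpr (Ne.symm hq)
    constructor
    · rw [hc.1, pd1, h.fderiv]; simp [hf1]; ring
    · rw [hc.2, pd2, h.fderiv]; simp [hf2]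
  intro p hp
  have hq0 : k₁ - p.2 ≠ 0 := sub_ne_zero.mpr (Ne.symm hp)
  have hpd1φ : ∀ q, q.2 ≠ k₁ → pd1 φ q = f1 q := fun q hq => (hψd q hq).1
  have hpd2φ : ∀ q, q.2 ≠ k₁ → pd2 φ q = f2 q := fun q hq => (hψd q hq).2
  -- second derivatives
  have hf1d := pd_quot k₁ 0 2 k₂ 1 p hp
  have hf2d := pd_quot k₁ 1 k₂ k₃ 2 p hp
  have h11 : pd1 (pd1 φ) p = pd1 f1 p := (pd_congr k₁ _ _ hpd1φ p hp).1
  have h21 : pd2 (pd1 φ) p = pd2 f1 p := (pd_congr k₁ _ _ hpd1φ p hp).2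
  have h22 : pd2 (pd2 φ) p = pd2 f2 p := (pd_congr k₁ _ _ hpd2φ p hp).2
  -- pd1 f1 = g1 on U
  have hpd1f1 : ∀ q, q.2 ≠ k₁ → pd1 f1 q = g1 q := by
    intro q hq
    rw [(pd_quot k₁ 0 2 k₂ 1 q hq).1, hg1]
    ring_nf
  have h111 : pd1 (pd1 (pd1 φ)) p = pd1 g1 p := by
    have hstep : ∀ q, q.2 ≠ k₁ → pd1 (pd1 φ) q = g1 q := by
      intro q hq
      rw [(pd_congr k₁ _ _ hpd1φ q hq).1, hpd1f1 q hq]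
    exact (pd_congr k₁ _ _ hstep p hp).1
  have hg1d := (pd_quot k₁ 0 0 2 1 p hp).1
  refine ⟨?_, ?_, ?_⟩
  · rw [h21, h11, hpd1φ p hp, hf1d.2, hf1d.1, hf1]
    field_simp
    ring
  · rw [h22, h11, hpd2φ p hp, hf2d.2, hf1d.1, hf2]
    field_simp
    ring
  · rw [h111, hg1d]
    ring
end
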